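/- arXiv:2004.14866 — 4 statements merged into one kernel-verified Lean document; each statement's English description precedes it below -/
import Mathlib

section
/- In the general quasi-Newton scheme, for all k ≥ 0 one has r_k ≤ ξ_k·λ_k. -/
open Matrix Finset

/-- The Broyden family update of a Hessian approximation `G` with respect to
the target matrix `A` along direction `u`, parameterized by `τ`. -/
noncomputable def broyd {n : ℕ} (τ : ℝ) (A G : Matrix (Fin n) (Fin n) ℝ) (u : Fin n → ℝ) :
    Matrix (Fin n) (Fin n) ℝ :=
  if u = 0 then G
  else
    let aUU : ℝ := u ⬝ᵥ A.mulVec u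
    let gUU : ℝ := u ⬝ᵥ G.mulVec u
    let agaUU : ℝ := u ⬝ᵥ (A * G⁻¹ * A).mulVec u
    let ρ : ℝ := gUU / aUU
    let φ : ℝ := τ * (aUU / agaUU) / (τ * (aUU / agaUU) + (1 - τ) * ρ)
    φ • (G - aUU⁻¹ • (A * vecMulVec u u * G + G * vecMulVec u u * A)
          + ((ρ + 1) / aUU) • (A * vecMulVec u u * A)) +
    (1 - φ) • (G - gUU⁻¹ • (G * vecMulVec u u * G) + aUU⁻¹ • (A * vecMulVec u u * A))

/-- `psdLE P Q` (i.e. `P ⪯ Q`) : the matrix `Q - P` is positive semidefinite. -/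
def psdLE {n : ℕ} (P Q : Matrix (Fin n) (Fin n) ℝ) : Prop := (Q - P).PosSemidef

/-- The closeness measure ν(A, G, u). -/
noncomputable def nuMeas {n : ℕ} (A G : Matrix (Fin n) (Fin n) ℝ) (u : Fin n → ℝ) : ℝ :=
  Real.sqrt ((u ⬝ᵥ ((G - A) * G⁻¹ * (G - A)).mulVec u) / (u ⬝ᵥ A.mulVec u))

/-- The log-det barrier V(A, G) = ln det (A⁻¹ G). -/
noncomputable def logDetBarrier {n : ℕ} (A G : Matrix (Fin n) (Fin n) ℝ) : ℝ :=
  Real.log (A⁻¹ * G).det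

/-- The augmented log-det barrier ψ(G, A) = ln det (A⁻¹ G) - tr (G⁻¹ (G - A)). -/
noncomputable def psiBarrier {n : ℕ} (G A : Matrix (Fin n) (Fin n) ℝ) : ℝ :=
  Real.log (A⁻¹ * G).det - (G⁻¹ * (G - A)).trace

/-- The Hessian matrix of `f` at `x` (second derivative in coordinate directions). -/
noncomputable def hessF {n : ℕ} (f : (Fin n → ℝ) → ℝ) (x : Fin n → ℝ) :
    Matrix (Fin n) (Fin n) ℝ :=
  Matrix.of fun i j => fderiv ℝ (fderiv ℝ f) x (Pi.single i 1) (Pi.single j 1)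

/-- The gradient of `f` at `x`. -/
noncomputable def gradF {n : ℕ} (f : (Fin n → ℝ) → ℝ) (x : Fin n → ℝ) : Fin n → ℝ :=
  fun i => fderiv ℝ f x (Pi.single i 1)

/-- `f` is `M`-strongly self-concordant:
`∇²f(y) − ∇²f(x) ⪯ M‖y−x‖_z ∇²f(w)` for all `x, y, z, w`. -/
def StronglySelfConcordant {n : ℕ} (f : (Fin n → ℝ) → ℝ) (M : ℝ) : Prop :=
  ∀ x y z w : Fin n → ℝ,
    psdLE (hessF f y - hessF f x)
      ((M * Real.sqrt ((y - x) ⬝ᵥ (hessF f z).mulVec (y - x))) • hessF f w)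

section AuxAll
open intervalIntegral
variable {n : ℕ}
lemma hessF_entry_continuous (f : (Fin n → ℝ) → ℝ) (hf : ContDiff ℝ 2 f) (i j : Fin n) :
    Continuous fun x => hessF f x i j := by
  have h1 : ContDiff ℝ 1 (fderiv ℝ f) := hf.fderiv_right (m := 1) (by norm_num)
  have h2 : Continuous (fderiv ℝ (fderiv ℝ f)) := (h1.fderiv_right (m := 0) (by norm_num)).continuous
  have h3 : Continuous fun x => (fderiv ℝ (fderiv ℝ f) x) (Pi.single i 1) :=
    (ContinuousLinearMap.apply ℝ _ (Pi.single i 1)).continuous.comp h2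
  exact (ContinuousLinearMap.apply ℝ ℝ (Pi.single j 1)).continuous.comp h3

lemma herm_smul {M : Matrix (Fin n) (Fin n) ℝ} (h : M.IsHermitian) (c : ℝ) :
    (c • M).IsHermitian := by
  rw [Matrix.IsHermitian, conjTranspose_smul, star_trivial, h]
lemma psd_smul {M : Matrix (Fin n) (Fin n) ℝ} (h : M.PosSemidef) {c : ℝ} (hc : 0 ≤ c) :
    (c • M).PosSemidef := by
  refine Matrix.PosSemidef.of_dotProduct_mulVec_nonneg (herm_smul h.1 c) fun v => ?_
  have := h.dotProduct_mulVec_nonneg v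
  simp only [Matrix.smul_mulVec, dotProduct_smul, smul_eq_mul]
  positivity

lemma psdLE_trans {P Q R : Matrix (Fin n) (Fin n) ℝ} (h1 : psdLE P Q) (h2 : psdLE Q R) :
    psdLE P R := by
  have : R - P = (R - Q) + (Q - P) := by abel
  unfold psdLE at *
  rw [this]
  exact h2.add h1

lemma psdLE_smul {P Q : Matrix (Fin n) (Fin n) ℝ} (h : psdLE P Q) {c : ℝ} (hc : 0 ≤ c) :
    psdLE (c • P) (c • Q) := by
  unfold psdLE at *
  rw [show c • Q - c • P = c • (Q - P) from by module]
  exact psd_smul h hc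

lemma psdLE_coeff {P : Matrix (Fin n) (Fin n) ℝ} (h : P.PosSemidef) {c c' : ℝ} (hc : c ≤ c') :
    psdLE (c • P) (c' • P) := by
  unfold psdLE
  rw [show c' • P - c • P = (c' - c) • P from by module]
  exact psd_smul h (by linarith)

lemma psd_cs {H : Matrix (Fin n) (Fin n) ℝ} (h : H.PosSemidef) (x y : Fin n → ℝ) :
    (x ⬝ᵥ H.mulVec y)^2 ≤ (x ⬝ᵥ H.mulVec x) * (y ⬝ᵥ H.mulVec y) := by
  have key : ∀ c : ℝ, 0 ≤ (y ⬝ᵥ H.mulVec y) * (c*c) + (2 * (x ⬝ᵥ H.mulVec y)) * c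
      + (x ⬝ᵥ H.mulVec x) := by
    intro c
    have h0 := h.dotProduct_mulVec_nonneg (x + c • y)
    have hsym : y ⬝ᵥ H.mulVec x = x ⬝ᵥ H.mulVec y := by
      rw [Matrix.dotProduct_mulVec, ← Matrix.mulVec_transpose,
        show Hᵀ = H from h.1, dotProduct_comm]
    simp only [star_trivial, Matrix.mulVec_add, Matrix.mulVec_smul, dotProduct_add,
      add_dotProduct, smul_dotProduct, dotProduct_smul, smul_eq_mul] at h0
    rw [hsym] at h0
    nlinarith [h0]
  have := discrim_le_zero key
  unfold discrim at this
  nlinarith [this]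

lemma qf_entry_integral (H : ℝ → Matrix (Fin n) (Fin n) ℝ)
    (hcont : ∀ i j, Continuous fun t => H t i j) (v : Fin n → ℝ) :
    v ⬝ᵥ (Matrix.of fun i j => ∫ t in (0:ℝ)..1, H t i j).mulVec v
      = ∫ t in (0:ℝ)..1, v ⬝ᵥ (H t).mulVec v := by
  have hcq : ∀ t0 : ℝ, Continuous fun t : ℝ => v ⬝ᵥ (H t).mulVec v := fun _ => by
    unfold dotProduct Matrix.mulVec
    exact continuous_finset_sum _ fun i _ => Continuous.mul continuous_const
      (continuous_finset_sum _ fun j _ => ((hcont i j).mul continuous_const))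
  have step : (∫ t in (0:ℝ)..1, v ⬝ᵥ (H t).mulVec v)
      = ∑ i, ∫ t in (0:ℝ)..1, v i * ∑ j, H t i j * v j := by
    rw [← integral_finset_sum]
    · unfold dotProduct Matrix.mulVec; rfl
    · intro i _
      exact (Continuous.mul continuous_const
        (continuous_finset_sum _ fun j _ => ((hcont i j).mul continuous_const))).intervalIntegrable _ _
  rw [step]
  simp only [dotProduct, Matrix.mulVec, Matrix.of_apply]
  refine Finset.sum_congr rfl fun i _ => ?_
  rw [intervalIntegral.integral_const_mul]
  congr 1
  rw [integral_finset_sum (f := fun j t => H t i j * v j) (fun j _ => (((hcont i j).mul continuous_const).intervalIntegrable _ _))]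
  refine Finset.sum_congr rfl fun j _ => ?_
  rw [intervalIntegral.integral_mul_const]

lemma psdLE_iff' (P Q : Matrix (Fin n) (Fin n) ℝ) :
    psdLE P Q ↔ (Q - P).IsHermitian ∧ ∀ v, v ⬝ᵥ P.mulVec v ≤ v ⬝ᵥ Q.mulVec v := by
  constructor
  · intro h
    exact ⟨h.1, fun v => by simpa [Matrix.sub_mulVec, dotProduct_sub, sub_nonneg] using h.dotProduct_mulVec_nonneg v⟩
  · rintro ⟨h1, h2⟩
    exact Matrix.PosSemidef.of_dotProduct_mulVec_nonneg h1 fun v => by simpa [Matrix.sub_mulVec, dotProduct_sub, sub_nonneg] using h2 v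

lemma seg_bounds (f : (Fin n → ℝ) → ℝ) (hf : ContDiff ℝ 2 f)
    (hpos : ∀ x, (hessF f x).PosDef)
    (M : ℝ) (hM : 0 ≤ M) (hssc : StronglySelfConcordant f M)
    (x0 u : Fin n → ℝ) (J : Matrix (Fin n) (Fin n) ℝ)
    (hJ : J = Matrix.of fun i j => ∫ t in (0:ℝ)..1, hessF f (x0 + t • u) i j)
    (r : ℝ) (hr : r = Real.sqrt (u ⬝ᵥ (hessF f x0).mulVec u)) :
    psdLE J ((1 + M*r/2) • hessF f x0) ∧ psdLE (hessF f (x0 + u)) ((1 + M*r/2) • J) := by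
  have hr0 : 0 ≤ r := hr ▸ Real.sqrt_nonneg _
  set Ht : ℝ → Matrix (Fin n) (Fin n) ℝ := fun t => hessF f (x0 + t • u) with hHt
  have hcont : ∀ i j, Continuous fun t : ℝ => Ht t i j := by
    intro i j
    exact (hessF_entry_continuous f hf i j).comp
      (continuous_const.add (continuous_id.smul continuous_const))
  have hcq : ∀ v, Continuous fun t : ℝ => v ⬝ᵥ (Ht t).mulVec v := by
    intro v
    unfold dotProduct Matrix.mulVec
    exact continuous_finset_sum _ fun i _ => Continuous.mul continuous_const
      (continuous_finset_sum _ fun j _ => ((hcont i j).mul continuous_const))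
  -- pointwise strong self-concordance bound
  have hkey : ∀ s t : ℝ, ∀ v, 0 ≤ s → 0 ≤ t →
      v ⬝ᵥ (Ht t).mulVec v ≤ (1 + M * |t - s| * r) * (v ⬝ᵥ (Ht s).mulVec v) := by
    intro s t v hs ht
    have h0 := hssc (x0 + s • u) (x0 + t • u) x0 (x0 + s • u)
    have hd : (x0 + t • u) - (x0 + s • u) = (t - s) • u := by
      rw [sub_smul]; abel
    rw [hd] at h0
    have hq : ((t - s) • u) ⬝ᵥ (hessF f x0).mulVec ((t - s) • u)
        = (t-s)^2 * (u ⬝ᵥ (hessF f x0).mulVec u) := by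
      simp only [Matrix.mulVec_smul, smul_dotProduct, dotProduct_smul, smul_eq_mul]
      ring
    have hsq : Real.sqrt ((t-s)^2 * (u ⬝ᵥ (hessF f x0).mulVec u)) = |t - s| * r := by
      rw [Real.sqrt_mul (sq_nonneg _), Real.sqrt_sq_eq_abs, hr]
    rw [hq, hsq] at h0
    have h1 := ((psdLE_iff' _ _).1 h0).2 v
    have h2 : 0 ≤ v ⬝ᵥ (Ht s).mulVec v := by
      simpa using (hpos (x0 + s • u)).posSemidef.dotProduct_mulVec_nonneg v
    simp only [Matrix.sub_mulVec, dotProduct_sub, Matrix.smul_mulVec,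
      dotProduct_smul, smul_eq_mul] at h1
    rw [hHt]
    simp only
    nlinarith [h1, h2, mul_nonneg (mul_nonneg hM (abs_nonneg (t-s))) hr0]
  have hqint : ∀ v, v ⬝ᵥ J.mulVec v = ∫ t in (0:ℝ)..1, v ⬝ᵥ (Ht t).mulVec v := by
    intro v
    rw [hJ]
    exact qf_entry_integral Ht hcont v
  have hJherm : J.IsHermitian := by
    have hsym : ∀ t : ℝ, ∀ i j, Ht t i j = Ht t j i := by
      intro t i j
      show hessF f (x0 + t • u) i j = hessF f (x0 + t • u) j i
      conv_lhs => rw [← (hpos (x0 + t • u)).1]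
      simp [Matrix.conjTranspose_apply]
    rw [Matrix.IsHermitian]
    ext i j
    rw [hJ]
    simp only [Matrix.conjTranspose_apply, Matrix.of_apply, star_trivial]
    congr 1
    funext t
    exact hsym t j i
  constructor
  · -- psdLE J ((1 + M*r/2) • H0)
    refine (psdLE_iff' _ _).2 ⟨(herm_smul (hpos x0).1 _).sub hJherm, fun v => ?_⟩
    rw [hqint v]
    have hmono : (∫ t in (0:ℝ)..1, v ⬝ᵥ (Ht t).mulVec v)
        ≤ ∫ t in (0:ℝ)..1, (1 + M*t*r) * (v ⬝ᵥ (Ht 0).mulVec v) := by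
      apply intervalIntegral.integral_mono_on (by norm_num)
        ((hcq v).intervalIntegrable _ _)
        (((continuous_const.add ((continuous_const.mul continuous_id).mul
          continuous_const)).mul continuous_const).intervalIntegrable _ _)
      intro t ht
      have := hkey 0 t v le_rfl ht.1
      simpa [abs_of_nonneg ht.1] using this
    have hcomp : (∫ t in (0:ℝ)..1, (1 + M*t*r) * (v ⬝ᵥ (Ht 0).mulVec v))
        = (1 + M*r/2) * (v ⬝ᵥ (Ht 0).mulVec v) := by
      rw [intervalIntegral.integral_mul_const]
      congr 1
      have e : (fun t : ℝ => 1 + M*t*r) = fun t : ℝ => 1 + (M*r)*t := by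
        funext t; ring
      rw [e]
      rw [intervalIntegral.integral_add (intervalIntegrable_const)
        ((by fun_prop : Continuous fun t : ℝ => (M*r)*t).intervalIntegrable _ _)]
      rw [intervalIntegral.integral_const_mul]
      simp [integral_id]
      ring
    rw [hcomp] at hmono
    have h00 : Ht 0 = hessF f x0 := by rw [hHt]; simp
    rw [h00] at hmono
    simpa [Matrix.smul_mulVec, dotProduct_smul, smul_eq_mul] using hmono
  · -- psdLE H1 ((1 + M*r/2) • J)
    refine (psdLE_iff' _ _).2 ⟨(herm_smul hJherm _).sub (hpos (x0 + u)).1, fun v => ?_⟩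
    set q : ℝ → ℝ := fun t => v ⬝ᵥ (Ht t).mulVec v with hqdef
    have hq1 : v ⬝ᵥ (hessF f (x0 + u)).mulVec v = q 1 := by
      rw [hqdef]; simp only [hHt, one_smul]
    have hrefl : (∫ t in (0:ℝ)..1, q (1 - t)) = ∫ t in (0:ℝ)..1, q t := by
      simpa using intervalIntegral.integral_comp_sub_left q 1
    have hpt : ∀ t ∈ Set.Icc (0:ℝ) 1, 4 * q 1 ≤ (2 + M*r) * (q t + q (1 - t)) := by
      intro t ht
      have e1 : q 1 ≤ (1 + M * |1 - t| * r) * q t := hkey t 1 v ht.1 (by norm_num)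
      have e2 : q 1 ≤ (1 + M * |1 - (1-t)| * r) * q (1-t) :=
        hkey (1 - t) 1 v (by linarith [ht.2]) (by norm_num)
      rw [abs_of_nonneg (by linarith [ht.2] : (0:ℝ) ≤ 1 - t)] at e1
      rw [show (1 : ℝ) - (1 - t) = t from by ring, abs_of_nonneg ht.1] at e2
      have hq00 : 0 ≤ q t := by simpa using (hpos (x0 + t • u)).posSemidef.dotProduct_mulVec_nonneg v
      have hq01 : 0 ≤ q (1-t) := by simpa using (hpos (x0 + (1-t) • u)).posSemidef.dotProduct_mulVec_nonneg v
      have hq11 : 0 ≤ q 1 := by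
        rw [← hq1]; simpa using (hpos (x0 + u)).posSemidef.dotProduct_mulVec_nonneg v
      set p : ℝ := 1 + M * (1-t) * r with hp'
      set p' : ℝ := 1 + M * t * r with hp''
      have hp0 : 0 < p := by
        have : 0 ≤ M * (1-t) * r := mul_nonneg (mul_nonneg hM (by linarith [ht.2])) hr0
        rw [hp']; linarith
      have hp1 : 0 < p' := by
        have : 0 ≤ M * t * r := mul_nonneg (mul_nonneg hM ht.1) hr0
        rw [hp'']; linarith
      have c1 : 0 ≤ p'*p'*(p*(q t) - q 1) := by
        have := mul_nonneg hp1.le hp1.le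
        nlinarith [e1]
      have c2 : 0 ≤ p*p*(p'*(q (1-t)) - q 1) := by
        have := mul_nonneg hp0.le hp0.le
        nlinarith [e2]
      have c3 : 0 ≤ (q 1)*(p-p')^2 := mul_nonneg hq11 (sq_nonneg _)
      have cid : p'*p'*(p*(q t) - q 1) + p*p*(p'*(q (1-t)) - q 1) + (q 1)*(p-p')^2
          = (p*p')*(p'*(q t) + p*(q (1-t)) - 2*(q 1)) := by ring
      have c4 : 0 ≤ (p*p')*(p'*(q t) + p*(q (1-t)) - 2*(q 1)) := by linarith
      have c5 : 0 ≤ p'*(q t) + p*(q (1-t)) - 2*(q 1) :=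
        nonneg_of_mul_nonneg_right c4 (mul_pos hp0 hp1)
      have hpq : p + p' = 2 + M*r := by rw [hp', hp'']; ring
      calc 4 * q 1 = 2 * q 1 + 2 * q 1 := by ring
        _ ≤ (p*(q t) + p'*(q (1-t))) + (p'*(q t) + p*(q (1-t))) := by linarith
        _ = (p + p') * (q t + q (1-t)) := by ring
        _ = (2 + M*r) * (q t + q (1-t)) := by rw [hpq]
    have hint : 4 * q 1 ≤ (2 + M*r) * (2 * ∫ t in (0:ℝ)..1, q t) := by
      have hgi : IntervalIntegrable (fun t => (2 + M*r) * (q t + q (1 - t))) MeasureTheory.volume 0 1 := by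
        apply Continuous.intervalIntegrable
        exact continuous_const.mul ((hcq v).add ((hcq v).comp (continuous_const.sub continuous_id)))
      have := intervalIntegral.integral_mono_on (by norm_num : (0:ℝ) ≤ 1)
        (intervalIntegrable_const) hgi hpt
      simp only [intervalIntegral.integral_const, smul_eq_mul, sub_zero, one_mul] at this
      have hqi : IntervalIntegrable (fun t : ℝ => q t) MeasureTheory.volume 0 1 :=
        (hcq v).intervalIntegrable _ _
      have hqi2 : IntervalIntegrable (fun t : ℝ => q (1 - t)) MeasureTheory.volume 0 1 := by
        apply Continuous.intervalIntegrable
        exact (hcq v).comp (continuous_const.sub continuous_id)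
      rw [intervalIntegral.integral_const_mul,
        intervalIntegral.integral_add hqi hqi2, hrefl] at this
      linarith [this]
    rw [hq1]
    simp only [Matrix.smul_mulVec, dotProduct_smul, smul_eq_mul]
    rw [hqint v]
    linarith [hint]

lemma pd_of_psdLE {P Q : Matrix (Fin n) (Fin n) ℝ} (h : psdLE P Q) (hP : P.PosDef) :
    Q.PosDef := by
  refine Matrix.PosDef.of_dotProduct_mulVec_pos ?_ fun v hv => ?_
  · have : Q = (Q - P) + P := by abel
    rw [this]; exact h.1.add hP.1
  · have h1 := ((psdLE_iff' _ _).1 h).2 v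
    have h2 := hP.dotProduct_mulVec_pos hv
    simp only [star_trivial] at h2
    simp only [star_trivial]
    linarith
lemma pd_unsmul {M : Matrix (Fin n) (Fin n) ℝ} {c : ℝ} (h : (c • M).PosDef) (hc : 0 < c) :
    M.PosDef := by
  refine Matrix.PosDef.of_dotProduct_mulVec_pos ?_ fun v hv => ?_
  · have := h.1
    have h2 : (c⁻¹ • (c • M)).IsHermitian := herm_smul this c⁻¹
    rwa [smul_smul, inv_mul_cancel₀ hc.ne', one_smul] at h2
  · have := h.dotProduct_mulVec_pos hv
    simp only [star_trivial, Matrix.smul_mulVec, dotProduct_smul, smul_eq_mul] at this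
    simp only [star_trivial]
    nlinarith [this]
lemma one_add_half_sq_le_exp {a : ℝ} (ha : 0 ≤ a) : (1 + a/2)^2 ≤ Real.exp a := by
  have h1 : 1 + a/2 ≤ Real.exp (a/2) := by
    have := Real.add_one_le_exp (a/2); linarith
  have h2 : (0:ℝ) ≤ 1 + a/2 := by linarith
  calc (1 + a/2)^2 ≤ Real.exp (a/2) ^ 2 := by nlinarith
    _ = Real.exp a := by rw [sq, ← Real.exp_add]; norm_num

lemma qf_expand (A : Matrix (Fin n) (Fin n) ℝ) (v w : Fin n → ℝ) (β : ℝ) :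
    (v - β • w) ⬝ᵥ A.mulVec (v - β • w)
      = v ⬝ᵥ A.mulVec v - β * (w ⬝ᵥ A.mulVec v) - β * (v ⬝ᵥ A.mulVec w)
        + β^2 * (w ⬝ᵥ A.mulVec w) := by
  simp [Matrix.mulVec_sub, Matrix.mulVec_smul, dotProduct_sub, sub_dotProduct,
    dotProduct_smul, smul_dotProduct, smul_eq_mul]
  ring

lemma dot_symm (A : Matrix (Fin n) (Fin n) ℝ) (hA : A.IsHermitian) (v w : Fin n → ℝ) :
    v ⬝ᵥ A.mulVec w = w ⬝ᵥ A.mulVec v := by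
  rw [Matrix.dotProduct_mulVec, ← Matrix.mulVec_transpose]
  have : Aᵀ = A := hA
  rw [this, dotProduct_comm]

lemma psdLE_iff (P Q : Matrix (Fin n) (Fin n) ℝ) :
    psdLE P Q ↔ (Q - P).IsHermitian ∧ ∀ v, v ⬝ᵥ P.mulVec v ≤ v ⬝ᵥ Q.mulVec v := by
  constructor
  · intro h
    exact ⟨h.1, fun v => by simpa [Matrix.sub_mulVec, dotProduct_sub, sub_nonneg] using h.dotProduct_mulVec_nonneg v⟩
  · rintro ⟨h1, h2⟩
    exact Matrix.PosSemidef.of_dotProduct_mulVec_nonneg h1 fun v => by simpa [Matrix.sub_mulVec, dotProduct_sub, sub_nonneg] using h2 v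

lemma vecMulVec_mulVec' (a b v : Fin n → ℝ) :
    (Matrix.vecMulVec a b).mulVec v = (b ⬝ᵥ v) • a := by
  funext i
  simp only [Matrix.mulVec, Matrix.vecMulVec_apply, dotProduct, Pi.smul_apply, smul_eq_mul,
    Finset.sum_mul, Finset.mul_sum]
  exact Finset.sum_congr rfl fun j _ => by ring

lemma qf_sandwich (P Q : Matrix (Fin n) (Fin n) ℝ) (a b v : Fin n → ℝ) :
    v ⬝ᵥ (P * Matrix.vecMulVec a b * Q).mulVec v
      = (v ⬝ᵥ P.mulVec a) * (b ⬝ᵥ Q.mulVec v) := by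
  rw [← Matrix.mulVec_mulVec, ← Matrix.mulVec_mulVec, vecMulVec_mulVec']
  simp [Matrix.mulVec_smul, dotProduct_smul, smul_eq_mul, mul_comm]

lemma bfgs_scalar (gvv gvu guu avv avu auu c : ℝ) (hguu : 0 < guu) (hauu : 0 < auu)
    (hc : 1 ≤ c)
    (h1 : avv - (gvu/guu)*avu - (gvu/guu)*avu + (gvu/guu)^2*auu
        ≤ c*(gvv - (gvu/guu)*gvu - (gvu/guu)*gvu + (gvu/guu)^2*guu)) :
    avv ≤ c*gvv - c*(gvu^2/guu) + c*(avu^2/auu) := by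
  set β := gvu/guu with hβ
  have e1 : c*(gvv - β*gvu - β*gvu + β^2*guu) = c*gvv - c*(gvu^2/guu) := by
    rw [hβ]; field_simp; ring
  rw [e1] at h1
  have h2 : 2*β*avu - β^2*auu ≤ avu^2/auu := by
    rw [← sub_nonneg]
    have : avu^2/auu - (2*β*avu - β^2*auu) = (avu - β*auu)^2/auu := by field_simp; ring
    rw [this]; positivity
  have h3 : avu^2/auu ≤ c*(avu^2/auu) := by
    have : 0 ≤ avu^2/auu := div_nonneg (sq_nonneg _) hauu.le
    nlinarith
  nlinarith

lemma dfp_scalar (gvv gvu guu avv avu auu c : ℝ) (hguu : 0 < guu) (hauu : 0 < auu)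
    (hc : 1 ≤ c)
    (h1 : avv - (avu/auu)*avu - (avu/auu)*avu + (avu/auu)^2*auu
        ≤ c*(gvv - (avu/auu)*gvu - (avu/auu)*gvu + (avu/auu)^2*guu)) :
    avv ≤ c*gvv - 2*c*(avu*gvu/auu) + c*((guu/auu + 1) * (avu^2/auu)) := by
  set α := avu/auu with hα
  have e0 : avv - α*avu - α*avu + α^2*auu = avv - avu^2/auu := by rw [hα]; field_simp; ring
  have e1 : c*(gvv - α*gvu - α*gvu + α^2*guu)
      = c*gvv - 2*c*(avu*gvu/auu) + c*(guu/auu)*(avu^2/auu) := by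
    rw [hα]; field_simp; ring
  rw [e0, e1] at h1
  have h3 : avu^2/auu ≤ c*(avu^2/auu) := by
    have : 0 ≤ avu^2/auu := div_nonneg (sq_nonneg _) hauu.le
    nlinarith
  nlinarith

lemma broyd_psd (τ c : ℝ) (A G : Matrix (Fin n) (Fin n) ℝ) (u : Fin n → ℝ)
    (hτ0 : 0 ≤ τ) (hτ1 : τ ≤ 1) (hc : 1 ≤ c)
    (hA : A.IsHermitian) (hG : G.PosDef) (hAu : 0 < u ⬝ᵥ A.mulVec u)
    (hle : psdLE A (c • G)) : psdLE A (c • broyd τ A G u) := by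
  have hu : u ≠ 0 := by
    rintro rfl; simp at hAu
  set U := Matrix.vecMulVec u u with hU
  set auu := u ⬝ᵥ A.mulVec u with hauu
  set guu := u ⬝ᵥ G.mulVec u with hguu
  set agauu := u ⬝ᵥ (A * G⁻¹ * A).mulVec u with hagauu
  set ρ : ℝ := guu / auu with hρ
  set φ : ℝ := τ * (auu / agauu) / (τ * (auu / agauu) + (1 - τ) * ρ) with hφ
  set D : Matrix (Fin n) (Fin n) ℝ :=
    G - auu⁻¹ • (A * U * G + G * U * A) + ((ρ + 1) / auu) • (A * U * A) with hD
  set Bf : Matrix (Fin n) (Fin n) ℝ :=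
    G - guu⁻¹ • (G * U * G) + auu⁻¹ • (A * U * A) with hBf
  have hbroyd : broyd τ A G u = φ • D + (1 - φ) • Bf := by
    rw [broyd, if_neg hu]
  -- positivity facts
  have hgu : 0 < guu := by
    have := hG.dotProduct_mulVec_pos hu; simpa [hguu] using this
  have hq : ∀ w, w ⬝ᵥ A.mulVec w ≤ c * (w ⬝ᵥ G.mulVec w) := by
    intro w
    have := (psdLE_iff _ _).1 hle |>.2 w
    simpa [Matrix.smul_mulVec, dotProduct_smul, smul_eq_mul] using this
  have hAune : A.mulVec u ≠ 0 := by
    intro h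
    rw [hauu, h] at hAu; simp at hAu
  have haga : 0 < agauu := by
    have hGinv : (G⁻¹).PosDef := hG.inv
    have := hGinv.dotProduct_mulVec_pos hAune
    calc (0:ℝ) < (A.mulVec u) ⬝ᵥ G⁻¹.mulVec (A.mulVec u) := by
            simpa using hGinv.dotProduct_mulVec_pos hAune
      _ = (G⁻¹.mulVec (A.mulVec u)) ⬝ᵥ A.mulVec u := dotProduct_comm _ _
      _ = u ⬝ᵥ A.mulVec (G⁻¹.mulVec (A.mulVec u)) := (dot_symm A hA _ _).symm
      _ = agauu := by rw [hagauu, ← Matrix.mulVec_mulVec, ← Matrix.mulVec_mulVec]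
  have hρ0 : 0 < ρ := div_pos hgu hAu
  have hσ0 : 0 < auu / agauu := div_pos hAu haga
  have hden : 0 < τ * (auu / agauu) + (1 - τ) * ρ := by
    rcases eq_or_lt_of_le hτ0 with h | h
    · simpa [← h] using hρ0
    · exact add_pos_of_pos_of_nonneg (mul_pos h hσ0)
        (mul_nonneg (by linarith) hρ0.le)
  have hφ0 : 0 ≤ φ := div_nonneg (mul_nonneg hτ0 hσ0.le) hden.le
  have hφ1 : φ ≤ 1 := by
    rw [hφ, div_le_one hden]
    nlinarith [mul_nonneg (sub_nonneg.2 hτ1) hρ0.le]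
  -- Hermitian facts
  have hAe : Aᴴ = A := hA
  have hGe : Gᴴ = G := hG.1
  have hUe : Uᴴ = U := by
    rw [hU]
    ext i j
    simp [Matrix.vecMulVec_apply, Matrix.conjTranspose_apply, mul_comm]
  have hDh : D.IsHermitian := by
    rw [hD, Matrix.IsHermitian]
    simp only [conjTranspose_add, conjTranspose_sub, conjTranspose_smul, conjTranspose_mul,
      hAe, hGe, hUe, star_trivial, Matrix.mul_assoc]
    abel
  have hBfh : Bf.IsHermitian := by
    rw [hBf, Matrix.IsHermitian]
    simp only [conjTranspose_add, conjTranspose_sub, conjTranspose_smul, conjTranspose_mul,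
      hAe, hGe, hUe, star_trivial, Matrix.mul_assoc]
  -- quadratic form bounds
  have hDq : ∀ v, v ⬝ᵥ A.mulVec v ≤ v ⬝ᵥ (c • D).mulVec v := by
    intro v
    set avv := v ⬝ᵥ A.mulVec v with havv
    set avu := v ⬝ᵥ A.mulVec u with havu
    set gvu := v ⬝ᵥ G.mulVec u with hgvu
    set gvv := v ⬝ᵥ G.mulVec v with hgvv
    have h1 := hq (v - (avu/auu) • u)
    rw [qf_expand A, qf_expand G, dot_symm A hA u v, dot_symm G hG.1 u v] at h1
    rw [← havv, ← havu, ← hgvu, ← hgvv, ← hauu, ← hguu] at h1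
    have h2 := dfp_scalar gvv gvu guu avv avu auu c hgu hAu hc h1
    have e : v ⬝ᵥ (c • D).mulVec v
        = c*gvv - 2*c*(avu*gvu/auu) + c*((guu/auu + 1) * (avu^2/auu)) := by
      rw [hD, hU]
      simp only [Matrix.smul_mulVec, Matrix.add_mulVec, Matrix.sub_mulVec,
        dotProduct_add, dotProduct_sub, dotProduct_smul, smul_eq_mul, qf_sandwich]
      rw [dot_symm A hA u v, dot_symm G hG.1 u v]
      rw [← havu, ← hgvu, ← hgvv, hρ]
      field_simp
      ring
    rw [e]; exact h2
  have hBq : ∀ v, v ⬝ᵥ A.mulVec v ≤ v ⬝ᵥ (c • Bf).mulVec v := by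
    intro v
    set avv := v ⬝ᵥ A.mulVec v with havv
    set avu := v ⬝ᵥ A.mulVec u with havu
    set gvu := v ⬝ᵥ G.mulVec u with hgvu
    set gvv := v ⬝ᵥ G.mulVec v with hgvv
    have h1 := hq (v - (gvu/guu) • u)
    rw [qf_expand A, qf_expand G, dot_symm A hA u v, dot_symm G hG.1 u v] at h1
    rw [← havv, ← havu, ← hgvu, ← hgvv, ← hauu, ← hguu] at h1
    have h2 := bfgs_scalar gvv gvu guu avv avu auu c hgu hAu hc h1
    have e : v ⬝ᵥ (c • Bf).mulVec v
        = c*gvv - c*(gvu^2/guu) + c*(avu^2/auu) := by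
      rw [hBf, hU]
      simp only [Matrix.smul_mulVec, Matrix.add_mulVec, Matrix.sub_mulVec,
        dotProduct_add, dotProduct_sub, dotProduct_smul, smul_eq_mul, qf_sandwich]
      rw [dot_symm A hA u v, dot_symm G hG.1 u v]
      rw [← havu, ← hgvu, ← hgvv]
      field_simp
    rw [e]; exact h2
  have hDpsd : (c • D - A).PosSemidef := by
    refine (psdLE_iff A (c • D)).2 ⟨(herm_smul hDh c).sub hA, hDq⟩
  have hBfpsd : (c • Bf - A).PosSemidef := by
    refine (psdLE_iff A (c • Bf)).2 ⟨(herm_smul hBfh c).sub hA, hBq⟩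
  have hdec : c • broyd τ A G u - A = φ • (c • D - A) + (1 - φ) • (c • Bf - A) := by
    rw [hbroyd]
    module
  show (c • broyd τ A G u - A).PosSemidef
  rw [hdec]
  exact (psd_smul hDpsd hφ0).add (psd_smul hBfpsd (by linarith))

end AuxAll

theorem gen_scheme_step_bound {n : ℕ} (hn : 1 ≤ n)
    (f : (Fin n → ℝ) → ℝ) (hf : ContDiff ℝ 2 f)
    (hpos : ∀ x, (hessF f x).PosDef)
    (B : Matrix (Fin n) (Fin n) ℝ) (hB : B.PosDef)
    (μ L M : ℝ) (hμ : 0 < μ) (hL : 0 < L) (hM : 0 ≤ M)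
    (hμB : ∀ x, psdLE (μ • B) (hessF f x)) (hLB : ∀ x, psdLE (hessF f x) (L • B))
    (hssc : StronglySelfConcordant f M)
    (τ : ℕ → ℝ) (hτ : ∀ k, τ k ∈ Set.Icc (0 : ℝ) 1)
    (x : ℕ → Fin n → ℝ) (G : ℕ → Matrix (Fin n) (Fin n) ℝ)
    (u : ℕ → Fin n → ℝ) (J : ℕ → Matrix (Fin n) (Fin n) ℝ)
    (hG0 : G 0 = L • B)
    (hx : ∀ k, x (k + 1) = x k - (G k)⁻¹.mulVec (gradF f (x k)))
    (hu : ∀ k, u k = x (k + 1) - x k)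
    (hJ : ∀ k, J k = Matrix.of fun i j => ∫ t in (0:ℝ)..1, hessF f (x k + t • u k) i j)
    (hGrec : ∀ k, G (k + 1) = broyd (τ k) (J k) (G k) (u k))
    (r : ℕ → ℝ) (hr : ∀ k, r k = Real.sqrt (u k ⬝ᵥ (hessF f (x k)).mulVec (u k)))
    (ξ : ℕ → ℝ) (hξ : ∀ k, ξ k = Real.exp (M * ∑ i ∈ Finset.range k, r i))
    (lam : ℕ → ℝ)
    (hlam : ∀ k, lam k =
      Real.sqrt (gradF f (x k) ⬝ᵥ (hessF f (x k))⁻¹.mulVec (gradF f (x k))))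
    (k : ℕ) :
    r k ≤ ξ k * lam k := by
  have hrnn : ∀ m, 0 ≤ r m := fun m => (hr m) ▸ Real.sqrt_nonneg _
  have hξ1 : ∀ m, 1 ≤ ξ m := fun m => by
    rw [hξ m]
    exact Real.one_le_exp (mul_nonneg hM (Finset.sum_nonneg fun i _ => hrnn i))
  have hξsucc : ∀ m, ξ (m+1) = ξ m * Real.exp (M * r m) := fun m => by
    rw [hξ, hξ, Finset.sum_range_succ, mul_add, Real.exp_add]
  have hx1 : ∀ m, x (m+1) = x m + u m := fun m => by rw [hu m]; abel
  have main : ∀ m, (G m).PosDef ∧ psdLE (hessF f (x m)) (ξ m • G m) := by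
    intro m
    induction m with
    | zero =>
      constructor
      · rw [hG0]
        refine Matrix.PosDef.of_dotProduct_mulVec_pos (herm_smul hB.1 L) fun v hv => ?_
        have h0 := hB.dotProduct_mulVec_pos hv
        simp only [star_trivial, Matrix.smul_mulVec, dotProduct_smul,
          smul_eq_mul] at h0 ⊢
        exact mul_pos hL h0
      · have hξ0 : ξ 0 = 1 := by rw [hξ]; simp
        rw [hξ0, one_smul, hG0]
        exact hLB (x 0)
    | succ m ih =>
      obtain ⟨hGpd, hLE⟩ := ih
      by_cases hu0 : u m = 0
      · have hG1 : G (m+1) = G m := by rw [hGrec m, broyd, if_pos hu0]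
        have hxx : x (m+1) = x m := by rw [hx1 m, hu0]; simp
        have hrr : r m = 0 := by rw [hr m, hu0]; simp
        have hξe : ξ (m+1) = ξ m := by rw [hξsucc m, hrr]; simp
        rw [hG1, hxx, hξe]
        exact ⟨hGpd, hLE⟩
      · obtain ⟨hseg1, hseg2⟩ :=
          seg_bounds f hf hpos M hM hssc (x m) (u m) (J m) (hJ m) (r m) (hr m)
        have ha0 : 0 ≤ M * r m := mul_nonneg hM (hrnn m)
        have hc1 : 1 ≤ (1 + M * r m/2) * ξ m := by nlinarith [hξ1 m]
        have h2 : psdLE ((1 + M * r m/2) • hessF f (x m)) (((1 + M * r m/2) * ξ m) • G m) := by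
          have h3 := psdLE_smul hLE (show (0:ℝ) ≤ 1 + M * r m/2 by linarith)
          rwa [smul_smul] at h3
        have hJG : psdLE (J m) (((1 + M * r m/2) * ξ m) • G m) := psdLE_trans hseg1 h2
        have hJherm : (J m).IsHermitian := by
          have he : J m
              = (1 + M * r m/2) • hessF f (x m) - ((1 + M * r m/2) • hessF f (x m) - J m) := by
            abel
          rw [he]
          exact (herm_smul (hpos (x m)).1 _).sub hseg1.1
        have hq2 := ((psdLE_iff' _ _).1 hseg2).2
        have hH1pd := hpos (x m + u m)
        have hJu : 0 < u m ⬝ᵥ (J m).mulVec (u m) := by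
          have h3 := hq2 (u m)
          have h4 := hH1pd.dotProduct_mulVec_pos hu0
          simp only [star_trivial, Matrix.smul_mulVec, dotProduct_smul,
            smul_eq_mul] at h3 h4 ⊢
          nlinarith [h3, h4]
        have hbro := broyd_psd (τ m) ((1 + M * r m/2) * ξ m) (J m) (G m) (u m)
          (hτ m).1 (hτ m).2 hc1 hJherm hGpd hJu hJG
        rw [← hGrec m] at hbro
        have hJpd : (J m).PosDef := by
          refine Matrix.PosDef.of_dotProduct_mulVec_pos hJherm fun v hv => ?_
          have h3 := hq2 v
          have h4 := hH1pd.dotProduct_mulVec_pos hv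
          simp only [star_trivial, Matrix.smul_mulVec, dotProduct_smul,
            smul_eq_mul] at h3 h4 ⊢
          nlinarith [h3, h4]
        have hG1pd : (G (m+1)).PosDef :=
          pd_unsmul (pd_of_psdLE hbro hJpd) (by nlinarith [hξ1 m] : (0:ℝ) < (1 + M * r m/2) * ξ m)
        refine ⟨hG1pd, ?_⟩
        have hch1 : psdLE (hessF f (x (m+1))) ((1 + M * r m/2) • J m) := by
          rw [hx1 m]; exact hseg2
        have hch2 : psdLE ((1 + M * r m/2) • J m)
            (((1 + M * r m/2) * ((1 + M * r m/2) * ξ m)) • G (m+1)) := by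
          have h3 := psdLE_smul hbro (show (0:ℝ) ≤ 1 + M * r m/2 by linarith)
          rwa [smul_smul] at h3
        have hch3 : psdLE (((1 + M * r m/2) * ((1 + M * r m/2) * ξ m)) • G (m+1))
            (ξ (m+1) • G (m+1)) := by
          apply psdLE_coeff hG1pd.posSemidef
          rw [hξsucc m]
          have hexp := one_add_half_sq_le_exp ha0
          nlinarith [hξ1 m, Real.exp_pos (M * r m)]
        exact psdLE_trans (psdLE_trans hch1 hch2) hch3
  obtain ⟨hGpd, hLE⟩ := main k
  have hHpd := hpos (x k)
  have hu' : u k = -((G k)⁻¹.mulVec (gradF f (x k))) := by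
    rw [hu k, hx k]; abel
  have hdet : IsUnit (G k).det := isUnit_iff_ne_zero.2 hGpd.det_pos.ne'
  have hGu : (G k).mulVec (u k) = -(gradF f (x k)) := by
    rw [hu', Matrix.mulVec_neg, Matrix.mulVec_mulVec, Matrix.mul_nonsing_inv _ hdet,
      Matrix.one_mulVec]
  have hHq0 : 0 ≤ u k ⬝ᵥ (hessF f (x k)).mulVec (u k) := by
    simpa using hHpd.posSemidef.dotProduct_mulVec_nonneg (u k)
  have hr2 : r k ^ 2 = u k ⬝ᵥ (hessF f (x k)).mulVec (u k) := by
    rw [hr k]; exact Real.sq_sqrt hHq0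
  have hlam0 : 0 ≤ gradF f (x k) ⬝ᵥ ((hessF f (x k))⁻¹).mulVec (gradF f (x k)) := by
    simpa using hHpd.inv.posSemidef.dotProduct_mulVec_nonneg (gradF f (x k))
  have hlam2 : lam k ^ 2 = gradF f (x k) ⬝ᵥ ((hessF f (x k))⁻¹).mulVec (gradF f (x k)) := by
    rw [hlam k]; exact Real.sq_sqrt hlam0
  have hlamnn : 0 ≤ lam k := (hlam k) ▸ Real.sqrt_nonneg _
  have hmono := ((psdLE_iff' _ _).1 hLE).2 (u k)
  simp only [Matrix.smul_mulVec, dotProduct_smul, smul_eq_mul] at hmono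
  have hug : u k ⬝ᵥ (G k).mulVec (u k) = -(u k ⬝ᵥ gradF f (x k)) := by
    rw [hGu, dotProduct_neg]
  rw [hug] at hmono
  have hdetH : IsUnit (hessF f (x k)).det := isUnit_iff_ne_zero.2 hHpd.det_pos.ne'
  have hy : (hessF f (x k)).mulVec (((hessF f (x k))⁻¹).mulVec (gradF f (x k)))
      = gradF f (x k) := by
    rw [Matrix.mulVec_mulVec, Matrix.mul_nonsing_inv _ hdetH, Matrix.one_mulVec]
  have hcs := psd_cs hHpd.posSemidef (u k) (((hessF f (x k))⁻¹).mulVec (gradF f (x k)))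
  rw [hy] at hcs
  have hyy : (((hessF f (x k))⁻¹).mulVec (gradF f (x k))) ⬝ᵥ gradF f (x k)
      = gradF f (x k) ⬝ᵥ ((hessF f (x k))⁻¹).mulVec (gradF f (x k)) := dotProduct_comm _ _
  rw [hyy, ← hr2, ← hlam2] at hcs
  have hw : -(u k ⬝ᵥ gradF f (x k)) ≤ r k * lam k := by
    nlinarith [hcs, mul_nonneg (hrnn k) hlamnn, sq_nonneg (r k * lam k + u k ⬝ᵥ gradF f (x k))]
  have hξpos : (0:ℝ) < ξ k := lt_of_lt_of_le one_pos (hξ1 k)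
  rcases eq_or_lt_of_le (hrnn k) with h0 | h0
  · rw [← h0]
    exact mul_nonneg hξpos.le hlamnn
  · have hchain : r k ^ 2 ≤ ξ k * (r k * lam k) := by
      calc r k ^ 2 ≤ ξ k * (-(u k ⬝ᵥ gradF f (x k))) := by rw [hr2]; exact hmono
        _ ≤ ξ k * (r k * lam k) := mul_le_mul_of_nonneg_left hw hξpos.le
    have hfin : r k * r k ≤ (ξ k * lam k) * r k := by nlinarith [hchain]
    exact le_of_mul_le_mul_right hfin h0
end

section
/- Let A, G be symmetric positive definite n×n matrices, u ∈ ℝ^n nonzero, τ ∈ [0,1], and G₊ := Broyd_τ(A, G, u). Then G₊ is invertible and G₊⁻¹ = τ·[ G⁻¹ − (G⁻¹A u uᵀ A G⁻¹)/⟨AG⁻¹Au, u⟩ + (u uᵀ)/⟨Au, u⟩ ] + (1−τ)·[ G⁻¹ − (G⁻¹A u uᵀ + u uᵀ A G⁻¹)/⟨Au, u⟩ + (⟨AG⁻¹Au, u⟩/⟨Au, u⟩ + 1)·(u uᵀ)/⟨Au, u⟩ ]. -/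
set_option maxHeartbeats 1000000
open Matrix Finset

namespace BroydAux
variable {n : ℕ}

theorem mul_vmv (M : Matrix (Fin n) (Fin n) ℝ) (x y : Fin n → ℝ) :
    M * vecMulVec x y = vecMulVec (M.mulVec x) y := by
  ext i j
  simp [mul_apply, vecMulVec_apply, mulVec, dotProduct, Finset.sum_mul, mul_assoc]

theorem vmv_mul (M : Matrix (Fin n) (Fin n) ℝ) (x y : Fin n → ℝ) :
    vecMulVec x y * M = vecMulVec x (M.vecMul y) := by
  ext i j
  simp [mul_apply, vecMulVec_apply, vecMul, dotProduct, Finset.mul_sum, mul_assoc]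

theorem vmv_mul_vmv (x y w z : Fin n → ℝ) :
    vecMulVec x y * vecMulVec w z = (y ⬝ᵥ w) • vecMulVec x z := by
  ext i j
  simp [mul_apply, vecMulVec_apply, dotProduct, Finset.sum_mul, Finset.mul_sum]
  ring_nf
  congr 1; ext k; ring

theorem vmv_mulVec (x y z : Fin n → ℝ) :
    (vecMulVec x y).mulVec z = (y ⬝ᵥ z) • x := by
  ext i
  simp only [mulVec, vecMulVec_apply, dotProduct, Pi.smul_apply, smul_eq_mul, Finset.sum_mul]
  exact Finset.sum_congr rfl fun k _ => by ring

theorem vmv_smul_left (c : ℝ) (x y : Fin n → ℝ) :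
    vecMulVec (c • x) y = c • vecMulVec x y := by
  ext i j; simp [vecMulVec_apply, mul_assoc]

theorem symdot (M : Matrix (Fin n) (Fin n) ℝ) (hM : Mᵀ = M) (x y : Fin n → ℝ) :
    x ⬝ᵥ M.mulVec y = M.mulVec x ⬝ᵥ y := by
  rw [dotProduct_mulVec, ← mulVec_transpose, hM]

theorem key (τ φ a g s : ℝ) (G Gi : Matrix (Fin n) (Fin n) ℝ) (u v w q : Fin n → ℝ)
    (hGGi : G * Gi = 1)
    (hGq : G.mulVec q = v) (hGu : G.mulVec u = w)
    (hwGi : Gi.vecMul w = u) (hvGi : Gi.vecMul v = q)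
    (hvu : v ⬝ᵥ u = a) (hwu : w ⬝ᵥ u = g) (hvq : v ⬝ᵥ q = s) (hwq : w ⬝ᵥ q = a)
    (ha : a ≠ 0) (hg : g ≠ 0) (hs : s ≠ 0)
    (hφ : φ = τ * (a / s) / (τ * (a / s) + (1 - τ) * (g / a)))
    (hD : τ * (a / s) + (1 - τ) * (g / a) ≠ 0) :
    (φ • (G - a⁻¹ • (vecMulVec v w + vecMulVec w v) + ((g / a + 1) / a) • vecMulVec v v)
      + (1 - φ) • (G - g⁻¹ • vecMulVec w w + a⁻¹ • vecMulVec v v)) *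
    (τ • (Gi - s⁻¹ • vecMulVec q q + a⁻¹ • vecMulVec u u)
      + (1 - τ) • (Gi - a⁻¹ • (vecMulVec q u + vecMulVec u q) + ((s / a + 1) / a) • vecMulVec u u))
      = 1 := by
  simp only [mul_add, add_mul, mul_sub, sub_mul, smul_mul_assoc, mul_smul_comm, smul_smul,
    smul_add, smul_sub, mul_vmv, vmv_mul, vmv_mul_vmv, hGGi, hGq, hGu, hwGi, hvGi,
    vmv_mulVec, vmv_smul_left, hvu, hwu, hvq, hwq]
  have h1 : φ * (τ * (a / s) + (1 - τ) * (g / a)) = τ * (a / s) := by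
    rw [hφ]; exact div_mul_cancel₀ _ hD
  have hrel : φ * (τ * a * a + (1 - τ) * (g * s)) = τ * a * a := by
    field_simp at h1
    linear_combination h1
  clear hφ hD h1
  match_scalars
  · ring
  · field_simp; linear_combination (-1) * hrel
  · field_simp; linear_combination (-1) * hrel
  · field_simp; linear_combination hrel
  · field_simp; linear_combination hrel

end BroydAux


open Matrix Finset

theorem broyd_inverse_formula {n : ℕ} (hn : 1 ≤ n)
    (A G : Matrix (Fin n) (Fin n) ℝ) (hA : A.PosDef) (hG : G.PosDef)
    (u : Fin n → ℝ) (hu : u ≠ 0) (τ : ℝ) (hτ : τ ∈ Set.Icc (0 : ℝ) 1) :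
    IsUnit (broyd τ A G u).det ∧
    (broyd τ A G u)⁻¹ =
      τ • (G⁻¹ - (u ⬝ᵥ (A * G⁻¹ * A).mulVec u)⁻¹ •
              (G⁻¹ * A * vecMulVec u u * A * G⁻¹) +
            (u ⬝ᵥ A.mulVec u)⁻¹ • vecMulVec u u) +
      (1 - τ) • (G⁻¹ - (u ⬝ᵥ A.mulVec u)⁻¹ •
              (G⁻¹ * A * vecMulVec u u + vecMulVec u u * A * G⁻¹) +
            (((u ⬝ᵥ (A * G⁻¹ * A).mulVec u) / (u ⬝ᵥ A.mulVec u) + 1) /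
                (u ⬝ᵥ A.mulVec u)) • vecMulVec u u) := by
  
  have hAT : Aᵀ = A := by
    ext i j
    simpa [conjTranspose_apply] using congrFun (congrFun hA.1 i) j
  have hGT : Gᵀ = G := by
    ext i j
    simpa [conjTranspose_apply] using congrFun (congrFun hG.1 i) j
  have hGdet : IsUnit G.det := isUnit_iff_ne_zero.mpr (ne_of_gt hG.det_pos)
  have hGGi : G * G⁻¹ = 1 := mul_nonsing_inv G hGdet
  have hGiG : G⁻¹ * G = 1 := nonsing_inv_mul G hGdet
  have hGiT : (G⁻¹)ᵀ = G⁻¹ := by rw [transpose_nonsing_inv, hGT]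
  have hvm : ∀ (M : Matrix (Fin n) (Fin n) ℝ), Mᵀ = M → ∀ x, x ᵥ* M = M *ᵥ x := by
    intro M hM x
    rw [← vecMul_transpose, hM]
  have hvmA : ∀ x, x ᵥ* A = A *ᵥ x := hvm A hAT
  have hvmG : ∀ x, x ᵥ* G = G *ᵥ x := hvm G hGT
  have hvmGi : ∀ x, x ᵥ* G⁻¹ = G⁻¹ *ᵥ x := hvm G⁻¹ hGiT
  have ha : 0 < u ⬝ᵥ A *ᵥ u := by simpa using hA.dotProduct_mulVec_pos hu
  have hg : 0 < u ⬝ᵥ G *ᵥ u := by simpa using hG.dotProduct_mulVec_pos hu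
  have hv0 : A *ᵥ u ≠ 0 := by
    intro h
    rw [h] at ha
    simp at ha
  have hs : 0 < u ⬝ᵥ A *ᵥ (G⁻¹ *ᵥ (A *ᵥ u)) := by
    rw [BroydAux.symdot A hAT]
    simpa using hG.inv.dotProduct_mulVec_pos hv0
  have hGq : G *ᵥ (G⁻¹ *ᵥ (A *ᵥ u)) = A *ᵥ u := by
    rw [mulVec_mulVec, hGGi, one_mulVec]
  have hwGi : (G *ᵥ u) ᵥ* G⁻¹ = u := by
    rw [hvmGi, mulVec_mulVec, hGiG, one_mulVec]
  have hvu : (A *ᵥ u) ⬝ᵥ u = u ⬝ᵥ A *ᵥ u := dotProduct_comm _ _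
  have hwu : (G *ᵥ u) ⬝ᵥ u = u ⬝ᵥ G *ᵥ u := dotProduct_comm _ _
  have hvq : (A *ᵥ u) ⬝ᵥ (G⁻¹ *ᵥ (A *ᵥ u)) = u ⬝ᵥ A *ᵥ (G⁻¹ *ᵥ (A *ᵥ u)) :=
    (BroydAux.symdot A hAT u _).symm
  have hwq : (G *ᵥ u) ⬝ᵥ (G⁻¹ *ᵥ (A *ᵥ u)) = u ⬝ᵥ A *ᵥ u := by
    rw [← BroydAux.symdot G hGT, mulVec_mulVec, hGGi, one_mulVec]
  have hDpos : 0 < τ * ((u ⬝ᵥ A *ᵥ u) / (u ⬝ᵥ A *ᵥ (G⁻¹ *ᵥ (A *ᵥ u)))) +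
      (1 - τ) * ((u ⬝ᵥ G *ᵥ u) / (u ⬝ᵥ A *ᵥ u)) := by
    rcases eq_or_lt_of_le hτ.1 with h | h
    · rw [← h]
      simpa using div_pos hg ha
    · have h1 : 0 < τ * ((u ⬝ᵥ A *ᵥ u) / (u ⬝ᵥ A *ᵥ (G⁻¹ *ᵥ (A *ᵥ u)))) :=
        mul_pos h (div_pos ha hs)
      have h2 : 0 ≤ (1 - τ) * ((u ⬝ᵥ G *ᵥ u) / (u ⬝ᵥ A *ᵥ u)) :=
        mul_nonneg (by linarith [hτ.2]) (le_of_lt (div_pos hg ha))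
      linarith
  have hmul : broyd τ A G u *
      (τ • (G⁻¹ - (u ⬝ᵥ (A * G⁻¹ * A).mulVec u)⁻¹ •
              (G⁻¹ * A * vecMulVec u u * A * G⁻¹) +
            (u ⬝ᵥ A.mulVec u)⁻¹ • vecMulVec u u) +
      (1 - τ) • (G⁻¹ - (u ⬝ᵥ A.mulVec u)⁻¹ •
              (G⁻¹ * A * vecMulVec u u + vecMulVec u u * A * G⁻¹) +
            (((u ⬝ᵥ (A * G⁻¹ * A).mulVec u) / (u ⬝ᵥ A.mulVec u) + 1) /
                (u ⬝ᵥ A.mulVec u)) • vecMulVec u u)) = 1 := by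
    simp only [broyd, if_neg hu, ← mulVec_mulVec, BroydAux.mul_vmv, BroydAux.vmv_mul,
      hvmA, hvmG, hvmGi]
    exact BroydAux.key τ _ (u ⬝ᵥ A *ᵥ u) (u ⬝ᵥ G *ᵥ u) (u ⬝ᵥ A *ᵥ (G⁻¹ *ᵥ (A *ᵥ u)))
      G G⁻¹ u (A *ᵥ u) (G *ᵥ u) (G⁻¹ *ᵥ (A *ᵥ u)) hGGi hGq rfl hwGi (hvmGi _)
      hvu hwu hvq hwq (ne_of_gt ha) (ne_of_gt hg) (ne_of_gt hs) rfl (ne_of_gt hDpos)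
  exact ⟨Matrix.isUnit_det_of_right_inverse hmul, Matrix.inv_eq_right_inv hmul⟩
end

section
/- Let A, G be symmetric positive definite n×n matrices, u ∈ ℝ^n nonzero, τ ∈ [0,1], and G₊ := Broyd_τ(A, G, u). Then det(G₊⁻¹G) = τ·⟨Au, u⟩/⟨AG⁻¹Au, u⟩ + (1−τ)·⟨Gu, u⟩/⟨Au, u⟩. -/
open Matrix Finset

variable {n : ℕ}

lemma mul_vmv' (A : Matrix (Fin n) (Fin n) ℝ) (u v : Fin n → ℝ) :
    A * vecMulVec u v = vecMulVec (A.mulVec u) v := by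
  rw [vecMulVec_eq Unit, vecMulVec_eq Unit, replicateCol_mulVec, Matrix.mul_assoc]

lemma vmv_mul' (A : Matrix (Fin n) (Fin n) ℝ) (u v : Fin n → ℝ) :
    vecMulVec u v * A = vecMulVec u (A.vecMul v) := by
  rw [vecMulVec_eq Unit, vecMulVec_eq Unit, replicateRow_vecMul, Matrix.mul_assoc]

set_option maxHeartbeats 1000000 in
theorem broyd_det_formula {n : ℕ} (hn : 1 ≤ n)
    (A G : Matrix (Fin n) (Fin n) ℝ) (hA : A.PosDef) (hG : G.PosDef)
    (u : Fin n → ℝ) (hu : u ≠ 0) (τ : ℝ) (hτ : τ ∈ Set.Icc (0 : ℝ) 1) :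
    ((broyd τ A G u)⁻¹ * G).det =
      τ * ((u ⬝ᵥ A.mulVec u) / (u ⬝ᵥ (A * G⁻¹ * A).mulVec u)) +
      (1 - τ) * ((u ⬝ᵥ G.mulVec u) / (u ⬝ᵥ A.mulVec u)) := by
  obtain ⟨hτ0, hτ1⟩ := hτ
  have hAs : Aᵀ = A := by ext i j; simpa using congrFun (congrFun hA.1 i) j
  have hGs : Gᵀ = G := by ext i j; simpa using congrFun (congrFun hG.1 i) j
  have hGi : G⁻¹.PosDef := hG.inv
  have hGis : (G⁻¹)ᵀ = G⁻¹ := by ext i j; simpa using congrFun (congrFun hGi.1 i) j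
  have hGdet : IsUnit G.det := isUnit_iff_ne_zero.mpr hG.det_pos.ne'
  set a := A.mulVec u with ha
  set g := G.mulVec u with hg
  set w := G⁻¹.mulVec a with hw
  set α := u ⬝ᵥ a with hα
  set γ := u ⬝ᵥ g with hγ
  have hα0 : 0 < α := hA.dotProduct_mulVec_pos hu
  have hγ0 : 0 < γ := hG.dotProduct_mulVec_pos hu
  have ha0 : a ≠ 0 := by rintro h; rw [hα, h] at hα0; simp at hα0
  have hvmA : u ᵥ* A = a := by rw [← hAs, vecMul_transpose]
  have hvmG : u ᵥ* G = g := by rw [← hGs, vecMul_transpose]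
  set β := u ⬝ᵥ (A * G⁻¹ * A).mulVec u with hβ
  have hβeq : β = a ⬝ᵥ w := by
    rw [hβ, ← Matrix.mulVec_mulVec, ← Matrix.mulVec_mulVec, dotProduct_mulVec, hvmA, hw]
  have hβ0 : 0 < β := by rw [hβeq]; exact hGi.dotProduct_mulVec_pos ha0
  set ρ : ℝ := γ / α with hρ
  set s : ℝ := α / β with hs
  set φ : ℝ := τ * s / (τ * s + (1 - τ) * ρ) with hφ
  have hs0 : 0 < s := div_pos hα0 hβ0
  have hρ0 : 0 < ρ := div_pos hγ0 hα0
  have hD0 : 0 < τ * s + (1 - τ) * ρ := by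
    rcases eq_or_lt_of_le hτ0 with h | h
    · simp [← h]; positivity
    · have : 0 < τ * s := mul_pos h hs0
      nlinarith [mul_nonneg (sub_nonneg.mpr hτ1) hρ0.le]
  set v₁ : Fin n → ℝ := (-(φ/α)) • g + ((φ * ρ + 1)/α) • a with hv₁
  set v₂ : Fin n → ℝ := (-(φ/α)) • a + (-((1-φ)/γ)) • g with hv₂
  set X : Matrix (Fin n) (Fin 2) ℝ := Matrix.of fun i j => ![w, u] j i with hX
  set Y : Matrix (Fin 2) (Fin n) ℝ := Matrix.of ![v₁, v₂] with hY
  have hb : broyd τ A G u = G + (vecMulVec a v₁ + vecMulVec g v₂) := by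
    rw [broyd, if_neg hu]
    simp only [mul_vmv', vmv_mul', hvmA, hvmG, ← ha, ← hg, ← hα, ← hγ, ← hβ, ← hρ, ← hs]
    ext i j
    simp only [Matrix.add_apply, Matrix.sub_apply, Matrix.smul_apply, vecMulVec_apply,
      smul_eq_mul, hv₁, hv₂, Pi.add_apply, Pi.smul_apply, Pi.neg_apply, ← hφ]
    field_simp
    ring

  have hGinvG : G⁻¹ * G = 1 := nonsing_inv_mul G hGdet
  have hGGinv : G * G⁻¹ = 1 := mul_nonsing_inv G hGdet
  have hGu : G⁻¹.mulVec g = u := by rw [hg, Matrix.mulVec_mulVec, hGinvG, Matrix.one_mulVec]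
  have hGw : G.mulVec w = a := by rw [hw, Matrix.mulVec_mulVec, hGGinv, Matrix.one_mulVec]
  have hXY : vecMulVec w v₁ + vecMulVec u v₂ = X * Y := by
    ext i j
    simp [hX, hY, Matrix.mul_apply, Fin.sum_univ_two, vecMulVec_apply]
  have hfact : broyd τ A G u = G * (1 + X * Y) := by
    rw [hb, ← hXY, Matrix.mul_add, Matrix.mul_one, Matrix.mul_add, mul_vmv', mul_vmv', hGw, ← hg]
  -- dot products
  have dgw : g ⬝ᵥ w = α := by
    rw [hw, dotProduct_mulVec, ← hGis, vecMul_transpose, hGu]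
  have daw : a ⬝ᵥ w = β := hβeq.symm
  have dgu : g ⬝ᵥ u = γ := by rw [dotProduct_comm]
  have dau : a ⬝ᵥ u = α := by rw [dotProduct_comm]
  have m00 : v₁ ⬝ᵥ w = -(φ/α)*α + ((φ*ρ+1)/α)*β := by
    rw [hv₁, add_dotProduct, smul_dotProduct, smul_dotProduct, smul_eq_mul, smul_eq_mul, dgw, daw]
  have m01 : v₁ ⬝ᵥ u = -(φ/α)*γ + ((φ*ρ+1)/α)*α := by
    rw [hv₁, add_dotProduct, smul_dotProduct, smul_dotProduct, smul_eq_mul, smul_eq_mul, dgu, dau]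
  have m10 : v₂ ⬝ᵥ w = -(φ/α)*β + (-((1-φ)/γ))*α := by
    rw [hv₂, add_dotProduct, smul_dotProduct, smul_dotProduct, smul_eq_mul, smul_eq_mul, daw, dgw]
  have m11 : v₂ ⬝ᵥ u = -(φ/α)*α + (-((1-φ)/γ))*γ := by
    rw [hv₂, add_dotProduct, smul_dotProduct, smul_dotProduct, smul_eq_mul, smul_eq_mul, dau, dgu]
  have hYX : Y * X = Matrix.of (fun p q => ![v₁, v₂] p ⬝ᵥ ![w, u] q) := rfl
  have hα' : α ≠ 0 := hα0.ne'
  have hγ' : γ ≠ 0 := hγ0.ne'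
  have hβ' : β ≠ 0 := hβ0.ne'
  have hD' : τ * s + (1 - τ) * ρ ≠ 0 := hD0.ne'
  have hdet2 : (1 + Y * X).det = (τ * s + (1 - τ) * ρ)⁻¹ := by
    rw [Matrix.det_fin_two, hYX]
    simp only [Matrix.add_apply, Matrix.of_apply, Matrix.cons_val_zero, Matrix.cons_val_one,
      Matrix.head_cons, Matrix.one_apply_eq,
      Matrix.one_apply_ne (show (0 : Fin 2) ≠ 1 by decide),
      Matrix.one_apply_ne (show (1 : Fin 2) ≠ 0 by decide), zero_add]
    rw [m00, m01, m10, m11]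
    have step1 : (1 + (-(φ / α) * α + (φ * ρ + 1) / α * β)) *
          (1 + (-(φ / α) * α + -((1 - φ) / γ) * γ)) -
        (-(φ / α) * γ + (φ * ρ + 1) / α * α) * (-(φ / α) * β + -((1 - φ) / γ) * α) =
        φ * (β / α) + (1 - φ) * (α / γ) := by
      rw [hρ]
      field_simp
      ring
    rw [step1]
    have hβα : β / α = s⁻¹ := by rw [hs, inv_div]
    have hαγ : α / γ = ρ⁻¹ := by rw [hρ, inv_div]
    rw [hβα, hαγ, hφ]
    have h1φ : 1 - τ * s / (τ * s + (1 - τ) * ρ) = (1 - τ) * ρ / (τ * s + (1 - τ) * ρ) := by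
      field_simp
      ring
    rw [h1φ]
    field_simp
    ring
  have hdetb : (broyd τ A G u).det = G.det * (τ * s + (1 - τ) * ρ)⁻¹ := by
    rw [hfact, Matrix.det_mul, Matrix.det_one_add_mul_comm, hdet2]
  have hGd' : G.det ≠ 0 := hG.det_pos.ne'
  rw [Matrix.det_mul, Matrix.det_nonsing_inv, Ring.inverse_eq_inv', hdetb]
  field_simp
end

section
/- Let a_1, …, a_m ∈ ℝ^n with ‖a_i‖ ≤ γ for all i (Euclidean norm), b_1, …, b_m ∈ ℝ, and define the log-sum-exp function f₀(x) := ln(Σ_{i=1}^m exp(⟨a_i, x⟩ + b_i)). Then for all x, h ∈ ℝ^n: the second directional derivative satisfies ⟨∇²f₀(x)h, h⟩ ≤ γ²·‖h‖², and the third directional derivative satisfies D³f₀(x)[h,h,h] ≤ 2γ·‖h‖·⟨∇²f₀(x)h, h⟩ ≤ 2γ³·‖h‖³. -/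
open Finset

noncomputable def Sfun {m : ℕ} (c d : Fin m → ℝ) (k : ℕ) (t : ℝ) : ℝ :=
  ∑ i, c i ^ k * Real.exp (c i * t + d i)

lemma hasDerivAt_Sfun {m : ℕ} (c d : Fin m → ℝ) (k : ℕ) (t : ℝ) :
    HasDerivAt (Sfun c d k) (Sfun c d (k+1) t) t := by
  unfold Sfun
  apply HasDerivAt.fun_sum
  intro i _
  have h1 : HasDerivAt (fun t : ℝ => c i * t + d i) (c i) t := by
    simpa using ((hasDerivAt_id t).const_mul (c i)).add_const (d i)
  have h2 := (h1.exp).const_mul (c i ^ k)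
  convert h2 using 1
  · rfl
  ring

lemma Sfun_pos {m : ℕ} (hm : 1 ≤ m) (c d : Fin m → ℝ) (t : ℝ) :
    0 < Sfun c d 0 t := by
  unfold Sfun
  apply Finset.sum_pos
  · intro i _; simpa using Real.exp_pos _
  · exact univ_nonempty_iff.2 (Fin.pos_iff_nonempty.mp hm)

set_option maxHeartbeats 800000 in
lemma core_bounds {m : ℕ} (hm : 1 ≤ m) (c d : Fin m → ℝ) (B : ℝ) (hB : 0 ≤ B)
    (hc : ∀ i, |c i| ≤ B) :
    iteratedDeriv 2 (fun t => Real.log (Sfun c d 0 t)) 0 ≤ B ^ 2 ∧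
    iteratedDeriv 3 (fun t => Real.log (Sfun c d 0 t)) 0 ≤
      2 * B * iteratedDeriv 2 (fun t => Real.log (Sfun c d 0 t)) 0 ∧
    2 * B * iteratedDeriv 2 (fun t => Real.log (Sfun c d 0 t)) 0 ≤ 2 * B ^ 3 := by
  have hpos := Sfun_pos hm c d
  set g : ℝ → ℝ := fun t => Real.log (Sfun c d 0 t) with hgdef
  -- first derivative as a function
  have hd1 : deriv g = fun t => Sfun c d 1 t / Sfun c d 0 t := by
    funext t
    exact ((hasDerivAt_Sfun c d 0 t).log (hpos t).ne').deriv
  -- second derivative as a function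
  have hdiv : ∀ t : ℝ, HasDerivAt (fun t => Sfun c d 1 t / Sfun c d 0 t)
      ((Sfun c d 2 t * Sfun c d 0 t - Sfun c d 1 t * Sfun c d 1 t) / Sfun c d 0 t ^ 2) t :=
    fun t => (hasDerivAt_Sfun c d 1 t).div (hasDerivAt_Sfun c d 0 t) (hpos t).ne'
  have hd2 : deriv (deriv g) = fun t =>
      (Sfun c d 2 t * Sfun c d 0 t - Sfun c d 1 t * Sfun c d 1 t) / Sfun c d 0 t ^ 2 := by
    rw [hd1]; funext t; exact (hdiv t).deriv
  -- third derivative value at 0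
  set s0 := Sfun c d 0 0
  set s1 := Sfun c d 1 0
  set s2 := Sfun c d 2 0
  set s3 := Sfun c d 3 0
  have hs0 : 0 < s0 := hpos 0
  have hnum : HasDerivAt (fun t => Sfun c d 2 t * Sfun c d 0 t - Sfun c d 1 t * Sfun c d 1 t)
      (s3 * s0 + s2 * s1 - (s2 * s1 + s1 * s2)) 0 := by
    exact ((hasDerivAt_Sfun c d 2 0).mul (hasDerivAt_Sfun c d 0 0)).sub
      ((hasDerivAt_Sfun c d 1 0).mul (hasDerivAt_Sfun c d 1 0))
  have hden : HasDerivAt (fun t => Sfun c d 0 t ^ 2) (2 * s0 ^ 1 * s1) 0 := by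
    simpa using (hasDerivAt_Sfun c d 0 0).fun_pow 2
  have hd3 : HasDerivAt (fun t =>
      (Sfun c d 2 t * Sfun c d 0 t - Sfun c d 1 t * Sfun c d 1 t) / Sfun c d 0 t ^ 2)
      (((s3 * s0 + s2 * s1 - (s2 * s1 + s1 * s2)) * s0 ^ 2 -
        (s2 * s0 - s1 * s1) * (2 * s0 ^ 1 * s1)) / (s0 ^ 2) ^ 2) 0 :=
    hnum.div hden (by positivity)
  have hD3 : (((s3 * s0 + s2 * s1 - (s2 * s1 + s1 * s2)) * s0 ^ 2 -
        (s2 * s0 - s1 * s1) * (2 * s0 ^ 1 * s1)) / (s0 ^ 2) ^ 2)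
      = (s3 * s0 ^ 2 - 3 * s2 * s1 * s0 + 2 * s1 ^ 3) / s0 ^ 3 := by
    field_simp
    ring
  have it2 : iteratedDeriv 2 g 0 = (s2 * s0 - s1 * s1) / s0 ^ 2 := by
    rw [show (2:ℕ) = 1 + 1 from rfl, iteratedDeriv_succ, iteratedDeriv_one, hd2]
  have it3 : iteratedDeriv 3 g 0 = (s3 * s0 ^ 2 - 3 * s2 * s1 * s0 + 2 * s1 ^ 3) / s0 ^ 3 := by
    rw [show (3:ℕ) = 2 + 1 from rfl, iteratedDeriv_succ,
      show iteratedDeriv 2 g = deriv (deriv g) by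
        rw [show (2:ℕ) = 1 + 1 from rfl, iteratedDeriv_succ, iteratedDeriv_one],
      hd2, ← hD3]
    exact hd3.deriv
  -- algebraic facts
  set w : Fin m → ℝ := fun i => Real.exp (c i * 0 + d i) with hw
  have hwpos : ∀ i, 0 < w i := fun i => Real.exp_pos _
  have e0 : s0 = ∑ i, w i := by simp [s0, Sfun, hw]
  have e1 : s1 = ∑ i, c i * w i := by simp [s1, Sfun, hw]
  have e2 : s2 = ∑ i, c i ^ 2 * w i := by simp [s2, Sfun, hw]
  have e3 : s3 = ∑ i, c i ^ 3 * w i := by simp [s3, Sfun, hw]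
  have hS2 : s2 ≤ B ^ 2 * s0 := by
    rw [e2, e0, Finset.mul_sum]
    apply Finset.sum_le_sum
    intro i _
    have := sq_abs (c i) ▸ pow_le_pow_left₀ (abs_nonneg (c i)) (hc i) 2
    nlinarith [(hwpos i).le]
  have hS1 : -(B * s0) ≤ s1 := by
    rw [e1, e0, Finset.mul_sum, ← Finset.sum_neg_distrib]
    apply Finset.sum_le_sum
    intro i _
    have h1 : -B ≤ c i := (abs_le.mp (hc i)).1
    nlinarith [(hwpos i).le]
  have hc' : ∀ i, c i ≤ B := fun i => (abs_le.mp (hc i)).2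
  -- key third-moment inequality
  have key : ∑ i, (c i * s0 - s1) ^ 3 * w i ≤
      ∑ i, 2 * B * s0 * ((c i * s0 - s1) ^ 2 * w i) := by
    apply Finset.sum_le_sum
    intro i _
    have hx : c i * s0 - s1 ≤ 2 * B * s0 := by
      have := hc' i
      nlinarith [hs0.le]
    nlinarith [sq_nonneg (c i * s0 - s1), (hwpos i).le,
      mul_le_mul_of_nonneg_right hx (mul_nonneg (sq_nonneg (c i * s0 - s1)) (hwpos i).le)]
  have hT : ∑ i, (c i * s0 - s1) ^ 3 * w i
      = s0 * (s3 * s0 ^ 2 - 3 * s2 * s1 * s0 + 2 * s1 ^ 3) := by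
    have : ∀ i ∈ univ, (c i * s0 - s1) ^ 3 * w i =
        s0 ^ 3 * (c i ^ 3 * w i) - 3 * s0 ^ 2 * s1 * (c i ^ 2 * w i)
        + 3 * s0 * s1 ^ 2 * (c i * w i) - s1 ^ 3 * w i := by
      intro i _; ring
    rw [Finset.sum_congr rfl this]
    simp only [Finset.sum_sub_distrib, Finset.sum_add_distrib, ← Finset.mul_sum,
      ← e0, ← e1, ← e2, ← e3]
    ring
  have hV : ∑ i, 2 * B * s0 * ((c i * s0 - s1) ^ 2 * w i)
      = 2 * B * s0 * (s0 * (s2 * s0 - s1 * s1)) := by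
    rw [← Finset.mul_sum]
    congr 1
    have : ∀ i ∈ univ, (c i * s0 - s1) ^ 2 * w i =
        s0 ^ 2 * (c i ^ 2 * w i) - 2 * s0 * s1 * (c i * w i) + s1 ^ 2 * w i := by
      intro i _; ring
    rw [Finset.sum_congr rfl this]
    simp only [Finset.sum_sub_distrib, Finset.sum_add_distrib, ← Finset.mul_sum,
      ← e0, ← e1, ← e2]
    ring
  have hN3 : s3 * s0 ^ 2 - 3 * s2 * s1 * s0 + 2 * s1 ^ 3
      ≤ 2 * B * s0 * (s2 * s0 - s1 * s1) := by
    have h := key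
    rw [hT, hV] at h
    nlinarith [hs0]
  -- conclusions
  have g2le : (s2 * s0 - s1 * s1) / s0 ^ 2 ≤ B ^ 2 := by
    rw [div_le_iff₀ (by positivity)]
    linarith [mul_le_mul_of_nonneg_right hS2 hs0.le, mul_self_nonneg s1]
  refine ⟨?_, ?_, ?_⟩
  · rw [it2]; exact g2le
  · have hrhs : 2 * B * ((s2 * s0 - s1 * s1) / s0 ^ 2)
        = (2 * B * (s2 * s0 - s1 * s1)) / s0 ^ 2 := by ring
    rw [it2, it3, hrhs, div_le_div_iff₀ (by positivity) (by positivity)]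
    linarith [mul_le_mul_of_nonneg_right hN3 (sq_nonneg s0)]
  · rw [it2]
    linarith [mul_le_mul_of_nonneg_left g2le (by positivity : (0:ℝ) ≤ 2 * B)]

open RealInnerProductSpace

theorem log_sum_exp_derivative_bounds {n m : ℕ} (hn : 1 ≤ n) (hm : 1 ≤ m)
    (a : Fin m → EuclideanSpace ℝ (Fin n)) (b : Fin m → ℝ)
    (γ : ℝ) (hγ : 0 < γ) (ha : ∀ i, ‖a i‖ ≤ γ)
    (f₀ : EuclideanSpace ℝ (Fin n) → ℝ)
    (hf₀ : f₀ = fun x => Real.log (∑ i, Real.exp (⟪a i, x⟫ + b i)))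
    (x h : EuclideanSpace ℝ (Fin n)) :
    iteratedDeriv 2 (fun t : ℝ => f₀ (x + t • h)) 0 ≤ γ ^ 2 * ‖h‖ ^ 2 ∧
    iteratedDeriv 3 (fun t : ℝ => f₀ (x + t • h)) 0 ≤
      2 * γ * ‖h‖ * iteratedDeriv 2 (fun t : ℝ => f₀ (x + t • h)) 0 ∧
    2 * γ * ‖h‖ * iteratedDeriv 2 (fun t : ℝ => f₀ (x + t • h)) 0 ≤
      2 * γ ^ 3 * ‖h‖ ^ 3 := by
  set c : Fin m → ℝ := fun i => ⟪a i, h⟫ with hcdef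
  set d : Fin m → ℝ := fun i => ⟪a i, x⟫ + b i with hddef
  have hg : (fun t : ℝ => f₀ (x + t • h)) = fun t => Real.log (Sfun c d 0 t) := by
    funext t
    simp only [hf₀, Sfun, pow_zero, one_mul, hcdef, hddef]
    congr 1
    apply Finset.sum_congr rfl
    intro i _
    congr 1
    rw [inner_add_right, real_inner_smul_right]
    ring
  have hB : (0:ℝ) ≤ γ * ‖h‖ := mul_nonneg hγ.le (norm_nonneg h)
  have hc : ∀ i, |c i| ≤ γ * ‖h‖ := fun i =>
    (abs_real_inner_le_norm (a i) h).trans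
      (mul_le_mul_of_nonneg_right (ha i) (norm_nonneg h))
  obtain ⟨h1, h2, h3⟩ := core_bounds hm c d (γ * ‖h‖) hB hc
  rw [hg]
  exact ⟨by nlinarith, by nlinarith, by nlinarith⟩
end
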